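/- Let f(x, y) = x + y mod 1 on ℝ/ℤ × ℝ/ℤ with Haar measure. For μ^ℕ × μ^ℕ-almost every pair of sequences (xₙ), (yₘ) in ℝ/ℤ, the Cesàro averages (1/r) Σ_{k<r} y_k converge to 1/2 (when representatives in [0,1) are used), and hence the sequences (xₙ) and (yₘ) can be recovered from the array (xₙ + yₘ mod 1)ₙ,ₘ up to a common rotation; more precisely, the map F_f is injective on a set of full μ^ℕ × μ^ℕ-measure modulo the diagonal rotation action c ↦ ((xₙ + c), (yₘ − c)). -/

import Mathlib

open MeasureTheory Filter

def IsProductMeasure {α : Type*} [MeasurableSpace α] (μ : Measure α) (ν : Measure (ℕ → α)) : Prop :=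
  ∀ (s : Finset ℕ) (A : ℕ → Set α), (∀ n, MeasurableSet (A n)) →
    ν {x | ∀ n ∈ s, x n ∈ A n} = ∏ n ∈ s, μ (A n)

/-- The representative in `[0,1)` of a point of `ℝ/ℤ`. -/
noncomputable def rep (y : UnitAddCircle) : ℝ := (AddCircle.equivIco 1 0 y : ℝ)

lemma rep_measurable : Measurable rep :=
  measurable_subtype_coe.comp (AddCircle.measurableEquivIco (T := 1) 0).measurable

lemma rep_mem (y : UnitAddCircle) : rep y ∈ Set.Ico (0:ℝ) 1 := by
  have := (AddCircle.equivIco 1 0 y).2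
  simpa [rep] using this

lemma prodMeasure_univ {ν : Measure (ℕ → UnitAddCircle)}
    (hν : IsProductMeasure volume ν) : ν Set.univ = 1 := by
  have := hν ∅ (fun _ => Set.univ) (fun _ => MeasurableSet.univ)
  simpa using this

lemma prodMeasure_marginal {ν : Measure (ℕ → UnitAddCircle)}
    (hν : IsProductMeasure volume ν) (k : ℕ) {A : Set UnitAddCircle}
    (hA : MeasurableSet A) : ν ((fun y => y k) ⁻¹' A) = volume A := by
  have := hν {k} (fun _ => A) (fun _ => hA)
  simpa [Set.preimage] using this

lemma prodMeasure_map_eval {ν : Measure (ℕ → UnitAddCircle)}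
    (hν : IsProductMeasure volume ν) (k : ℕ) :
    ν.map (fun y => y k) = volume := by
  ext A hA
  rw [Measure.map_apply (measurable_pi_apply k) hA, prodMeasure_marginal hν k hA]

lemma prodMeasure_indep {ν : Measure (ℕ → UnitAddCircle)}
    (hν : IsProductMeasure volume ν) {i j : ℕ} (hij : i ≠ j) :
    ProbabilityTheory.IndepFun (fun y => y i) (fun y => y j) ν := by
  rw [ProbabilityTheory.indepFun_iff_measure_inter_preimage_eq_mul]
  intro S T hS hT
  have key := hν {i, j} (fun n => if n = i then S else T)
    (fun n => by split <;> assumption)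
  have hset : {x : ℕ → UnitAddCircle | ∀ n ∈ ({i, j} : Finset ℕ),
      x n ∈ (if n = i then S else T)}
      = (fun y => y i) ⁻¹' S ∩ (fun y => y j) ⁻¹' T := by
    ext x
    simp [Finset.mem_insert, Finset.mem_singleton, hij, Ne.symm hij]
  have hprod : ∏ n ∈ ({i, j} : Finset ℕ), volume (if n = i then S else T)
      = volume S * volume T := by
    rw [Finset.prod_insert (by simpa using hij), Finset.prod_singleton,
      if_pos rfl, if_neg (Ne.symm hij)]
  rw [hset, hprod] at key
  rw [key, prodMeasure_marginal hν i hS, prodMeasure_marginal hν j hT]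

lemma add_cancel_aux {G : Type*} [AddCommGroup G] {a b c d a₀ c₀ : G}
    (h : a + b = c + d) (h0 : a₀ + b = c₀ + d) : c = a + (c₀ - a₀) := by
  have h1 : c = a + b - d := by rw [h]; abel
  have h2 : c₀ = a₀ + b - d := by rw [h0]; abel
  rw [h1, h2]; abel

/-- For a.e. pair of sequences, the Cesàro averages of the representatives converge to `1/2`,
and the map `F_f`, `f(x,y) = x + y`, is injective on a full-measure set modulo the diagonal
rotation action. -/
theorem stmt_4 (νx νy : Measure (ℕ → UnitAddCircle))
    (hνx : IsProductMeasure volume νx) (hνy : IsProductMeasure volume νy) :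
    (∀ᵐ p : (ℕ → UnitAddCircle) × (ℕ → UnitAddCircle) ∂(νx.prod νy),
      Tendsto (fun r : ℕ => (r : ℝ)⁻¹ * ∑ k ∈ Finset.range r, rep (p.2 k)) atTop
        (nhds (1 / 2))) ∧
    ∃ A : Set ((ℕ → UnitAddCircle) × (ℕ → UnitAddCircle)),
      (νx.prod νy) Aᶜ = 0 ∧
      ∀ p ∈ A, ∀ q ∈ A,
        (fun nm : ℕ × ℕ => p.1 nm.1 + p.2 nm.2) = (fun nm : ℕ × ℕ => q.1 nm.1 + q.2 nm.2) →
        ∃ c : UnitAddCircle, (∀ n, q.1 n = p.1 n + c) ∧ (∀ m, q.2 m = p.2 m - c) := by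
  have hpx : IsProbabilityMeasure νx := ⟨prodMeasure_univ hνx⟩
  have hpy : IsProbabilityMeasure νy := ⟨prodMeasure_univ hνy⟩
  constructor
  · -- Strong law of large numbers part
    set X : ℕ → (ℕ → UnitAddCircle) → ℝ := fun i y => rep (y i) with hX
    have hXmeas : ∀ i, Measurable (X i) := fun i =>
      rep_measurable.comp (measurable_pi_apply i)
    have hint : Integrable (X 0) νy := by
      refine (integrable_const (1 : ℝ)).mono' (hXmeas 0).aestronglyMeasurable ?_
      refine ae_of_all _ fun y => ?_
      have := rep_mem (y 0)
      rw [Real.norm_eq_abs, abs_le]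
      constructor <;> [linarith [this.1]; linarith [this.2]]
    have hindep : Pairwise (Function.onFun (ProbabilityTheory.IndepFun · · νy) X) := by
      intro i j hij
      exact (prodMeasure_indep hνy hij).comp rep_measurable rep_measurable
    have hident : ∀ i, ProbabilityTheory.IdentDistrib (X i) (X 0) νy νy := by
      intro i
      refine ⟨(hXmeas i).aemeasurable, (hXmeas 0).aemeasurable, ?_⟩
      have h1 : νy.map (X i) = (volume : Measure UnitAddCircle).map rep := by
        rw [show X i = rep ∘ (fun y => y i) from rfl,
          ← Measure.map_map rep_measurable (measurable_pi_apply i), prodMeasure_map_eval hνy i]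
      have h0 : νy.map (X 0) = (volume : Measure UnitAddCircle).map rep := by
        rw [show X 0 = rep ∘ (fun y => y 0) from rfl,
          ← Measure.map_map rep_measurable (measurable_pi_apply 0), prodMeasure_map_eval hνy 0]
      rw [h1, h0]
    have hmean : (∫ y, X 0 y ∂νy) = 1 / 2 := by
      have e1 : (∫ y, X 0 y ∂νy) = ∫ z, rep z ∂((νy.map (fun y => y 0))) := by
        rw [integral_map (measurable_pi_apply 0).aemeasurable rep_measurable.aestronglyMeasurable]
      rw [e1, prodMeasure_map_eval hνy 0]
      have e2 : (∫ z : UnitAddCircle, rep z) = ∫ a in Set.Ioc (0:ℝ) (0 + 1), rep ↑a :=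
        (AddCircle.integral_preimage 1 0 rep).symm
      rw [e2]
      rw [show (0:ℝ) + 1 = 1 by ring, integral_Ioc_eq_integral_Ioo]
      have e3 : ∀ a ∈ Set.Ioo (0:ℝ) 1, rep ↑a = a := by
        intro a ha
        have : rep ↑a = Int.fract (a / 1) * 1 := AddCircle.coe_equivIco_mk_apply (p := (1:ℝ)) a
        rw [this, div_one, mul_one, Int.fract_eq_self.2 ⟨ha.1.le, ha.2⟩]
      rw [setIntegral_congr_fun measurableSet_Ioo e3]
      rw [← integral_Ioc_eq_integral_Ioo, ← intervalIntegral.integral_of_le (by norm_num : (0:ℝ) ≤ 1)]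
      simp [integral_id]
    have hslln := ProbabilityTheory.strong_law_ae X hint hindep hident
    rw [hmean] at hslln
    have hmap : (νx.prod νy).map Prod.snd = νy := by
      rw [Measure.map_snd_prod, measure_univ, one_smul]
    have : ∀ᵐ q ∂((νx.prod νy).map Prod.snd),
        Tendsto (fun r : ℕ => (r : ℝ)⁻¹ • ∑ k ∈ Finset.range r, X k q) atTop (nhds (1/2)) := by
      rw [hmap]; exact hslln
    have h2 := ae_of_ae_map (measurable_snd.aemeasurable) this
    filter_upwards [h2] with p hp
    simpa [smul_eq_mul] using hp
  · -- Injectivity part (purely algebraic, on all of the space)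
    refine ⟨Set.univ, by simp, ?_⟩
    rintro p - q - hpq
    refine ⟨q.1 0 - p.1 0, fun n => ?_, fun m => ?_⟩
    · have e : p.1 n + p.2 0 = q.1 n + q.2 0 := congrFun hpq (n, 0)
      have e0 : p.1 0 + p.2 0 = q.1 0 + q.2 0 := congrFun hpq (0, 0)
      exact add_cancel_aux e e0
    · have e : p.1 0 + p.2 m = q.1 0 + q.2 m := congrFun hpq (0, m)
      have h1 : q.2 m = p.1 0 + p.2 m - q.1 0 := by rw [e]; abel
      rw [h1]; abel
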